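/- Let $A$ be an invertible lower triangular $n \times n$ matrix over a field. For $1 \le i \le j \le n$ define $z_{i,j} = \Delta_{[i,j],[1,j-i+1]}(A) / \Delta_{[i+1,j],[1,j-i]}(A)$ (the ratio of consecutive bottom-left justified minors), assuming all these minors are nonzero. Then the matrix $A$ is uniquely determined by the collection $(z_{i,j})_{1 \le i \le j \le n}$: explicitly, $A$ equals the product $W^n(z_{n,n}) \cdots W^1(z_{1,1}, z_{1,2}/z_{1,1}, \dots, z_{1,n}/z_{1,n-1})$, where $W^i(w_i,\dots,w_n) = \sum_{k=1}^{i-1} E_{kk} + \sum_{k=i}^{n} w_k E_{kk} + \sum_{k=i}^{n-1} E_{k+1,k}$. -/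

import Mathlib

/-- The minor `Δ_{I,J}(A)` with row set `I` and column set `J` (increasing order);
`0` if `|I| ≠ |J|`, `1` if both empty. -/
noncomputable def minorF {K : Type*} [CommRing K] {n : ℕ}
    (A : Matrix (Fin n) (Fin n) K) (I J : Finset (Fin n)) : K :=
  if h : I.card = J.card then
    Matrix.det (Matrix.of fun a b : Fin I.card =>
      A ((I.orderIsoOfFin rfl a : Fin n)) ((J.orderIsoOfFin h.symm b : Fin n)))
  else 0

/-- The interval `[a, b]` (1-indexed) inside `Fin n`. -/
def II (n a b : ℕ) : Finset (Fin n) :=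
  Finset.univ.filter fun t => a ≤ (t : ℕ) + 1 ∧ (t : ℕ) + 1 ≤ b

/-- The factor `W^i(w_i, …, w_n) = ∑_{k<i} E_{kk} + ∑_{k≥i} w_k E_{kk} + ∑_{k≥i} E_{k+1,k}`
(1-indexed `i`; here rows/columns of `Fin n` are 0-indexed, paper index `= val + 1`). -/
def Wfactor (n : ℕ) {K : Type*} [Field K] (i : ℕ) (w : Fin n → K) :
    Matrix (Fin n) (Fin n) K :=
  Matrix.of fun k l =>
    if k = l then (if (k : ℕ) + 1 < i then 1 else w k)
    else if (k : ℕ) = (l : ℕ) + 1 ∧ i ≤ (l : ℕ) + 1 then 1 else 0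

namespace WhirlAux

open Matrix Finset


open Matrix Finset

variable {K : Type*} [Field K]

/-- zero extension of a matrix to ℕ-indices -/
def ab {N : ℕ} (A : Matrix (Fin N) (Fin N) K) (k l : ℕ) : K :=
  if h : k < N ∧ l < N then A ⟨k, h.1⟩ ⟨l, h.2⟩ else 0

lemma ab_congr {N : ℕ} (A : Matrix (Fin N) (Fin N) K) {k l k' l' : ℕ}
    (hk : k = k') (hl : l = l') : ab A k l = ab A k' l' := by rw [hk, hl]

lemma ab_apply {N : ℕ} (A : Matrix (Fin N) (Fin N) K) {k l : ℕ} (hk : k < N) (hl : l < N) :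
    ab A k l = A ⟨k, hk⟩ ⟨l, hl⟩ := by
  rw [ab, dif_pos ⟨hk, hl⟩]

lemma II_card {N a b : ℕ} (ha : 1 ≤ a) (hb : b ≤ N) (hab : a ≤ b + 1) :
    (II N a b).card = b + 1 - a := by
  rcases lt_or_ge b a with h | h
  · have : II N a b = ∅ := by
      ext t; simp only [II, mem_filter, mem_univ, true_and, notMem_empty, iff_false]
      omega
    rw [this]; simp; omega
  · have h1 : a - 1 < N := by omega
    have h2 : b - 1 < N := by omega
    have : II N a b = Finset.Icc (⟨a - 1, h1⟩ : Fin N) ⟨b - 1, h2⟩ := by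
      ext t
      simp only [II, mem_filter, mem_univ, true_and, Finset.mem_Icc]
      rw [Fin.le_def, Fin.le_def]
      simp only []
      omega
    rw [this, Fin.card_Icc]
    simp only []
    omega

lemma minorF_II_eq {N : ℕ} (A : Matrix (Fin N) (Fin N) K) {a b c d k : ℕ}
    (ha : 1 ≤ a) (hb : b ≤ N) (hab : a ≤ b + 1)
    (hc : 1 ≤ c) (hd : d ≤ N) (hcd : c ≤ d + 1)
    (hk1 : b + 1 - a = k) (hk2 : d + 1 - c = k) :
    minorF A (II N a b) (II N c d) =
      Matrix.det (Matrix.of fun p q : Fin k => ab A (a - 1 + (p : ℕ)) (c - 1 + (q : ℕ))) := by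
  have hIcard : (II N a b).card = k := by rw [II_card ha hb hab]; exact hk1
  have hJcard : (II N c d).card = k := by rw [II_card hc hd hcd]; exact hk2
  have hcard : (II N a b).card = (II N c d).card := by rw [hIcard, hJcard]
  -- the row and column enumerating maps
  have hfb : ∀ p : Fin k, a - 1 + (p : ℕ) < N := fun p => by have := p.2; omega
  have hgb : ∀ q : Fin k, c - 1 + (q : ℕ) < N := fun q => by have := q.2; omega
  set f : Fin k → Fin N := fun p => ⟨a - 1 + (p : ℕ), hfb p⟩ with hf
  set g : Fin k → Fin N := fun q => ⟨c - 1 + (q : ℕ), hgb q⟩ with hg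
  have hfmono : StrictMono f := fun p q h => by
    simp only [hf, Fin.mk_lt_mk, Fin.lt_def] at h ⊢; omega
  have hgmono : StrictMono g := fun p q h => by
    simp only [hg, Fin.mk_lt_mk, Fin.lt_def] at h ⊢; omega
  have hfmem : ∀ p, f p ∈ II N a b := fun p => by
    simp only [II, mem_filter, mem_univ, true_and, hf]
    have := p.2; omega
  have hgmem : ∀ q, g q ∈ II N c d := fun q => by
    simp only [II, mem_filter, mem_univ, true_and, hg]
    have := q.2; omega
  have hfeq : f = (II N a b).orderEmbOfFin hIcard := orderEmbOfFin_unique hIcard hfmem hfmono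
  have hgeq : g = (II N c d).orderEmbOfFin hJcard := orderEmbOfFin_unique hJcard hgmem hgmono
  rw [minorF, dif_pos hcard]
  subst hIcard
  congr 1
  ext p q
  simp only [Matrix.of_apply]
  rw [Finset.coe_orderIsoOfFin_apply, Finset.coe_orderIsoOfFin_apply]
  rw [ab_apply A (hfb p) (hgb q)]
  congr 1
  · rw [← hfeq]
  · have : (II N c d).orderEmbOfFin hcard.symm = (II N c d).orderEmbOfFin hJcard := rfl
    rw [this, ← hgeq]



open Matrix Finset


lemma succAbove_val {n : ℕ} (p : Fin (n + 1)) (i : Fin n) :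
    (p.succAbove i : ℕ) = if (i : ℕ) < (p : ℕ) then (i : ℕ) else (i : ℕ) + 1 := by
  rw [Fin.succAbove]
  by_cases h : Fin.castSucc i < p
  · rw [if_pos h, if_pos (by simpa [Fin.lt_def] using h)]; rfl
  · rw [if_neg h, if_neg (by simpa [Fin.lt_def] using h)]; rfl

/-- leading principal `m × m` minor (as a det) -/
noncomputable def DD (a : ℕ → ℕ → K) (m : ℕ) : K :=
  Matrix.det (Matrix.of fun p q : Fin m => a (p : ℕ) (q : ℕ))

/-- the minor with rows `1..m`, columns `0..m-1` -/
noncomputable def EE (a : ℕ → ℕ → K) (m : ℕ) : K :=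
  Matrix.det (Matrix.of fun p q : Fin m => a ((p : ℕ) + 1) (q : ℕ))

/-- rows `1..j` followed by row `k`, columns `0..j` -/
noncomputable def FF (a : ℕ → ℕ → K) (k j : ℕ) : K :=
  Matrix.det (Matrix.of fun p q : Fin (j + 1) =>
    a (if (p : ℕ) = j then k else (p : ℕ) + 1) (q : ℕ))

noncomputable def PD (a : ℕ → ℕ → K) (x y : ℕ) : K := ∏ r ∈ Finset.Ico x y, a r r

-- helper: a sum supported on two indices
lemma sum_two {M : Type*} [AddCommMonoid M] {n : ℕ} (f : Fin n → M)
    (i j : Fin n) (hij : i ≠ j)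
    (h : ∀ m, m ≠ i → m ≠ j → f m = 0) :
    ∑ m, f m = f i + f j := by
  rw [← Finset.sum_subset (Finset.subset_univ {i, j})]
  · rw [Finset.sum_insert (by simp [hij]), Finset.sum_singleton]
  · intro x _ hx
    simp only [Finset.mem_insert, Finset.mem_singleton, not_or] at hx
    exact h x hx.1 hx.2

section Dets
variable {a : ℕ → ℕ → K} (htri : ∀ {k l : ℕ}, k < l → a k l = 0)

include htri

lemma DD_eq_prod (m : ℕ) : DD a m = ∏ r ∈ Finset.range m, a r r := by
  rw [DD, Matrix.det_of_lowerTriangular]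
  · rw [← Fin.prod_univ_eq_prod_range]
    rfl
  · intro i j h
    have hij : i < j := h
    exact htri (Fin.lt_def.mp hij)

omit htri in
lemma FF_zero (k : ℕ) : FF a k 0 = a k 0 := by
  rw [FF, Matrix.det_fin_one]
  simp

lemma FF_succ (k j : ℕ) :
    FF a k (j + 1) = a k (j + 1) * EE a (j + 1) - a (j + 1) (j + 1) * FF a k j := by
  have hjlt : (j : ℕ) < j + 2 := by omega
  have hj1lt : (j + 1 : ℕ) < j + 2 := by omega
  rw [FF, Matrix.det_succ_column _ (Fin.last (j + 1))]
  rw [sum_two _ (Fin.mk j hjlt) (Fin.mk (j+1) hj1lt) (by simp [Fin.ext_iff])]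
  · have e1 : ((Matrix.of fun p q : Fin (j + 2) =>
        a (if (p : ℕ) = j + 1 then k else (p : ℕ) + 1) (q : ℕ)).submatrix
        (Fin.succAbove (Fin.mk j hjlt)) (Fin.succAbove (Fin.last (j + 1)))) =
        (Matrix.of fun p q : Fin (j + 1) =>
          a (if (p : ℕ) = j then k else (p : ℕ) + 1) (q : ℕ)) := by
      ext p q
      simp only [Matrix.submatrix_apply, Matrix.of_apply, Fin.succAbove_last, Fin.coe_castSucc]
      rw [succAbove_val]
      congr 1
      have := p.2
      simp only [Fin.val_mk]
      split_ifs <;> omega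
    have e2 : ((Matrix.of fun p q : Fin (j + 2) =>
        a (if (p : ℕ) = j + 1 then k else (p : ℕ) + 1) (q : ℕ)).submatrix
        (Fin.succAbove (Fin.mk (j+1) hj1lt)) (Fin.succAbove (Fin.last (j + 1)))) =
        (Matrix.of fun p q : Fin (j + 1) => a ((p : ℕ) + 1) (q : ℕ)) := by
      ext p q
      simp only [Matrix.submatrix_apply, Matrix.of_apply, Fin.succAbove_last, Fin.coe_castSucc]
      rw [succAbove_val]
      congr 1
      have := p.2
      simp only [Fin.val_mk]
      split_ifs <;> omega
    rw [e1, e2, ← FF, ← EE]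
    have hA : (Matrix.of fun p q : Fin (j + 2) =>
        a (if (p : ℕ) = j + 1 then k else (p : ℕ) + 1) (q : ℕ))
          (Fin.mk j hjlt) (Fin.last (j+1)) = a (j+1) (j+1) := by
      simp only [Matrix.of_apply, Fin.val_mk, Fin.val_last]
      rw [if_neg (by omega)]
    have hB : (Matrix.of fun p q : Fin (j + 2) =>
        a (if (p : ℕ) = j + 1 then k else (p : ℕ) + 1) (q : ℕ))
          (Fin.mk (j+1) hj1lt) (Fin.last (j+1)) = a k (j+1) := by
      simp
    rw [hA, hB]
    simp only [Fin.val_mk, Fin.val_last]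
    have s1 : (-1 : K) ^ (j + (j + 1)) = -1 :=
      Odd.neg_one_pow ⟨j, by ring⟩
    have s2 : (-1 : K) ^ ((j + 1) + (j + 1)) = 1 :=
      Even.neg_one_pow ⟨j + 1, by ring⟩
    rw [s1, s2]
    ring
  · intro m hm1 hm2
    simp only [Matrix.of_apply, Fin.val_last]
    have hmj : (m : ℕ) ≠ j := fun h => hm1 (Fin.ext h)
    have hmj1 : (m : ℕ) ≠ j + 1 := fun h => hm2 (Fin.ext h)
    rw [if_neg hmj1, htri (by omega)]
    ring

omit htri in
lemma FF_top (j : ℕ) : FF a (j + 1) j = EE a (j + 1) := by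
  rw [FF, EE]
  congr 1
  ext p q
  rcases eq_or_ne (p : ℕ) j with h | h
  · simp [h]
  · simp [h]

/-- main telescoping sum -/
lemma T_eq (k : ℕ) : ∀ j, j + 1 ≤ k →
    ∑ m ∈ Finset.range (j + 1), (-1 : K) ^ m * a k m * EE a m * PD a (m + 1) (j + 1) =
      (-1 : K) ^ j * FF a k j := by
  intro j
  induction j with
  | zero =>
    intro _
    simp [FF_zero (a := a), PD, EE, Matrix.det_fin_zero]
  | succ j ihj =>
    intro hjk
    have hterm : ∀ m ∈ Finset.range (j + 1),
        (-1 : K) ^ m * a k m * EE a m * PD a (m + 1) (j + 2) =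
        ((-1 : K) ^ m * a k m * EE a m * PD a (m + 1) (j + 1)) * a (j+1) (j+1) := by
      intro m hm
      simp only [Finset.mem_range] at hm
      rw [PD, PD, Finset.prod_Ico_succ_top (by omega)]
      ring
    rw [Finset.sum_range_succ, Finset.sum_congr rfl hterm, ← Finset.sum_mul,
        ihj (by omega), FF_succ htri]
    have : PD a (j + 1 + 1) (j + 1 + 1) = 1 := by rw [PD]; simp
    rw [this]
    ring

lemma keyId {k : ℕ} (hk : 1 ≤ k) :
    ∑ m ∈ Finset.range (k + 1), (-1 : K) ^ m * a k m * EE a m * PD a (m + 1) (k + 1) = 0 := by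
  obtain ⟨j, rfl⟩ : ∃ j, k = j + 1 := ⟨k - 1, by omega⟩
  have hterm : ∀ m ∈ Finset.range (j + 1),
      (-1 : K) ^ m * a (j+1) m * EE a m * PD a (m + 1) (j + 1 + 1) =
      ((-1 : K) ^ m * a (j+1) m * EE a m * PD a (m + 1) (j + 1)) * a (j+1) (j+1) := by
    intro m hm
    simp only [Finset.mem_range] at hm
    rw [PD, PD, Finset.prod_Ico_succ_top (by omega)]
    ring
  rw [Finset.sum_range_succ, Finset.sum_congr rfl hterm, ← Finset.sum_mul,
      T_eq htri (j + 1) j (by omega), FF_top]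
  have h1 : PD a (j + 1 + 1) (j + 1 + 1) = 1 := by rw [PD]; simp
  rw [h1, pow_succ]
  ring
end Dets

/-- the matrix `C = A W⁻¹` -/
noncomputable def CC (a : ℕ → ℕ → K) (zz : ℕ → K) (N k l : ℕ) : K :=
  ∑ m ∈ Finset.Ico l N, (-1 : K) ^ (m - l) * a k m * (zz l / zz (m + 1))

variable {a : ℕ → ℕ → K} {N : ℕ} {zz : ℕ → K}

lemma CC_end (a : ℕ → ℕ → K) (zz : ℕ → K) (N k : ℕ) : CC a zz N k N = 0 := by
  rw [CC]
  simp

section Clemmas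
variable (htri : ∀ {k l : ℕ}, k < l → a k l = 0)
  (hzz0 : zz 0 = 1) (hzzne : ∀ m, m ≤ N → zz m ≠ 0)
  (hzzdef : ∀ m, m < N → zz (m + 1) = DD a (m + 1) / EE a m)
  (hdiag : ∀ r, r < N → a r r ≠ 0)
  (hrow : ∀ k l, N ≤ k → a k l = 0)

include hzzne in
lemma Arel (k l : ℕ) (hl : l < N) :
    a k l = CC a zz N k l * (zz (l + 1) / zz l) + CC a zz N k (l + 1) := by
  have h1 : zz l ≠ 0 := hzzne l (by omega)
  have h2 : zz (l + 1) ≠ 0 := hzzne (l + 1) (by omega)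
  have hrec : CC a zz N k l
      = a k l * (zz l / zz (l + 1)) - (zz l / zz (l + 1)) * CC a zz N k (l + 1) := by
    rw [CC, Finset.sum_eq_sum_Ico_succ_bot hl]
    have hsum : ∑ m ∈ Finset.Ico (l + 1) N, (-1 : K) ^ (m - l) * a k m * (zz l / zz (m + 1))
        = -(zz l / zz (l + 1)) *
          ∑ m ∈ Finset.Ico (l + 1) N, (-1 : K) ^ (m - (l + 1)) * a k m * (zz (l+1) / zz (m + 1)) := by
      rw [Finset.mul_sum]
      refine Finset.sum_congr rfl fun m hm => ?_
      rw [Finset.mem_Ico] at hm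
      have e : m - l = (m - (l + 1)) + 1 := by omega
      rw [e, pow_succ]
      have hstep : zz l / zz (l + 1) * (zz (l + 1) / zz (m + 1)) = zz l / zz (m + 1) :=
        div_mul_div_cancel₀ h2
      rw [← hstep]
      ring
    rw [hsum, ← CC]
    simp only [Nat.sub_self, pow_zero, one_mul]
    ring
  rw [hrec]
  field_simp
  ring

include htri in
lemma CC_upper (k l : ℕ) (hkl : k < l) : CC a zz N k l = 0 := by
  rw [CC]
  refine Finset.sum_eq_zero fun m hm => ?_
  rw [Finset.mem_Ico] at hm
  rw [htri (show k < m by omega)]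
  ring

include hrow in
lemma CC_bigrow (k l : ℕ) (hk : N ≤ k) : CC a zz N k l = 0 := by
  rw [CC]
  refine Finset.sum_eq_zero fun m hm => ?_
  rw [hrow k m hk]
  ring

include htri hzz0 hzzdef hdiag hrow in
lemma CC_col0 (k : ℕ) (hk : 1 ≤ k) : CC a zz N k 0 = 0 := by
  rcases le_or_gt N k with h | h
  · exact CC_bigrow hrow k 0 h
  · have hD : ∀ m, m ≤ k → DD a (m + 1) ≠ 0 := by
      intro m hm
      rw [DD_eq_prod htri]
      exact Finset.prod_ne_zero_iff.mpr fun r hr => hdiag r (by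
        rw [Finset.mem_range] at hr; omega)
    have hP : ∀ m, m ≤ k → PD a (m + 1) (k + 1) ≠ 0 := by
      intro m hm
      rw [PD]
      exact Finset.prod_ne_zero_iff.mpr fun r hr => hdiag r (by
        rw [Finset.mem_Ico] at hr; omega)
    have hsplit0 : CC a zz N k 0 = ∑ m ∈ Finset.range (k + 1),
        (-1 : K) ^ (m - 0) * a k m * (zz 0 / zz (m + 1)) := by
      rw [CC, ← Nat.Ico_zero_eq_range,
        ← Finset.sum_Ico_consecutive _ (Nat.zero_le (k+1)) (show k + 1 ≤ N by omega)]
      have : ∑ m ∈ Finset.Ico (k + 1) N, (-1 : K) ^ (m - 0) * a k m * (zz 0 / zz (m + 1)) = 0 :=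
        Finset.sum_eq_zero fun m hm => by
          rw [Finset.mem_Ico] at hm
          rw [htri (show k < m by omega)]; ring
      rw [this, add_zero]
    have hterm : ∀ m ∈ Finset.range (k + 1),
        (-1 : K) ^ (m - 0) * a k m * (zz 0 / zz (m + 1)) =
        ((-1 : K) ^ m * a k m * EE a m * PD a (m + 1) (k + 1)) / DD a (k + 1) := by
      intro m hm
      rw [Finset.mem_range] at hm
      rw [hzz0, hzzdef m (by omega), one_div_div]
      have hsplit : DD a (k + 1) = DD a (m + 1) * PD a (m + 1) (k + 1) := by
        rw [DD_eq_prod htri, DD_eq_prod htri, PD, ← Nat.Ico_zero_eq_range,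
          ← Finset.prod_Ico_consecutive _ (Nat.zero_le (m+1)) (show m + 1 ≤ k + 1 by omega)]
        rw [← Nat.Ico_zero_eq_range]
      rw [hsplit, Nat.sub_zero]
      rw [show (-1 : K) ^ m * a k m * EE a m * PD a (m + 1) (k + 1) =
        ((-1 : K) ^ m * a k m * EE a m) * PD a (m + 1) (k + 1) by ring]
      rw [mul_div_mul_right _ _ (hP m (by omega))]
      ring
    rw [hsplit0, Finset.sum_congr rfl hterm, ← Finset.sum_div, keyId htri hk, zero_div]

include htri hzz0 hzzdef hdiag in
lemma CC_00 (h0 : 0 < N) : CC a zz N 0 0 = 1 := by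
  rw [CC, Finset.sum_eq_sum_Ico_succ_bot h0]
  have h2 : ∑ m ∈ Finset.Ico 1 N, (-1 : K) ^ (m - 0) * a 0 m * (zz 0 / zz (m + 1)) = 0 :=
    Finset.sum_eq_zero fun m hm => by
      rw [Finset.mem_Ico] at hm
      rw [htri (show 0 < m by omega)]; ring
  rw [h2, add_zero, hzz0, hzzdef 0 h0]
  have hDD1 : DD a 1 = a 0 0 := by rw [DD, Matrix.det_fin_one]; rfl
  have hEE0 : EE a 0 = 1 := by rw [EE, Matrix.det_fin_zero]
  rw [hDD1, hEE0]
  simp only [Nat.sub_zero, pow_zero, one_mul, div_one]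
  rw [one_div, mul_inv_cancel₀ (hdiag 0 h0)]

include htri hzz0 hzzne hzzdef hdiag hrow in
lemma det_transfer (i m : ℕ) (hi : 1 ≤ i) (hm : m ≤ N) :
    Matrix.det (Matrix.of fun p q : Fin m => a (i + (p : ℕ)) (q : ℕ)) =
    Matrix.det (Matrix.of fun p q : Fin m => CC a zz N (i + (p : ℕ)) ((q : ℕ) + 1)) := by
  classical
  set U : Matrix (Fin m) (Fin m) K := Matrix.of fun c l =>
    (if c = l then (1 : K) else 0) +
      (if (c : ℕ) + 1 = (l : ℕ) then zz ((l : ℕ) + 1) / zz (l : ℕ) else 0) with hUdef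
  have hU : Matrix.det U = 1 := by
    have htriU : Matrix.BlockTriangular U id := by
      intro c l h
      have hlc : (l : ℕ) < (c : ℕ) := h
      simp only [hUdef, Matrix.of_apply]
      rw [if_neg (by intro hh; subst hh; omega), if_neg (by omega)]
      ring
    rw [Matrix.det_of_upperTriangular htriU]
    refine Finset.prod_eq_one fun c _ => ?_
    simp only [hUdef, Matrix.of_apply]
    rw [if_neg (show ¬((c : ℕ) + 1 = (c : ℕ)) by omega)]
    simp
  have hfact : (Matrix.of fun p q : Fin m => a (i + (p : ℕ)) (q : ℕ)) =
      (Matrix.of fun p q : Fin m => CC a zz N (i + (p : ℕ)) ((q : ℕ) + 1)) * U := by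
    ext p l
    rw [Matrix.mul_apply]
    simp only [hUdef, Matrix.of_apply]
    have expand : ∀ c : Fin m,
        CC a zz N (i + (p : ℕ)) ((c : ℕ) + 1) *
          ((if c = l then (1 : K) else 0) +
            (if (c : ℕ) + 1 = (l : ℕ) then zz ((l : ℕ) + 1) / zz (l : ℕ) else 0)) =
        (if c = l then CC a zz N (i + (p : ℕ)) ((c : ℕ) + 1) else 0) +
        (if (c : ℕ) + 1 = (l : ℕ)
          then CC a zz N (i + (p : ℕ)) ((c : ℕ) + 1) * (zz ((l : ℕ) + 1) / zz (l : ℕ)) else 0) := by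
      intro c
      rw [mul_add, mul_ite, mul_one, mul_zero, mul_ite, mul_zero]
    rw [Finset.sum_congr rfl fun c _ => expand c, Finset.sum_add_distrib]
    rw [Finset.sum_ite_eq' Finset.univ l
      (fun c => CC a zz N (i + (p : ℕ)) ((c : ℕ) + 1)), if_pos (Finset.mem_univ l)]
    have hlN : (l : ℕ) < N := lt_of_lt_of_le l.2 hm
    rcases Nat.eq_zero_or_pos (l : ℕ) with hl0 | hlpos
    · have hzero : ∑ c : Fin m, (if (c : ℕ) + 1 = (l : ℕ)
          then CC a zz N (i + (p : ℕ)) ((c : ℕ) + 1) * (zz ((l : ℕ) + 1) / zz (l : ℕ)) else 0)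
          = 0 :=
        Finset.sum_eq_zero fun c _ => by rw [if_neg (by omega)]
      rw [hzero, add_zero]
      have := Arel (a := a) hzzne (i + (p : ℕ)) (l : ℕ) hlN
      rw [hl0] at this ⊢
      rw [this, CC_col0 htri hzz0 hzzdef hdiag hrow (i + (p : ℕ)) (by omega)]
      ring
    · obtain ⟨r, hr⟩ : ∃ r, (l : ℕ) = r + 1 := ⟨(l : ℕ) - 1, by omega⟩
      have hrm : r < m := by have := l.2; omega
      have hcond : ∀ c : Fin m, ((c : ℕ) + 1 = (l : ℕ)) ↔ (c = ⟨r, hrm⟩) := by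
        intro c
        constructor
        · intro hc; exact Fin.ext (by simp only []; omega)
        · intro hc; subst hc; simp only [Fin.val_mk]; omega
      have hre : ∀ c : Fin m, (if (c : ℕ) + 1 = (l : ℕ)
          then CC a zz N (i + (p : ℕ)) ((c : ℕ) + 1) * (zz ((l : ℕ) + 1) / zz (l : ℕ)) else 0) =
          (if c = ⟨r, hrm⟩
          then CC a zz N (i + (p : ℕ)) ((c : ℕ) + 1) * (zz ((l : ℕ) + 1) / zz (l : ℕ)) else 0) := by
        intro c
        by_cases hc : (c : ℕ) + 1 = (l : ℕ)
        · rw [if_pos hc, if_pos ((hcond c).mp hc)]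
        · rw [if_neg hc, if_neg fun hh => hc ((hcond c).mpr hh)]
      rw [Finset.sum_congr rfl fun c _ => hre c]
      rw [Finset.sum_ite_eq' Finset.univ (⟨r, hrm⟩ : Fin m)
        (fun c => CC a zz N (i + (p : ℕ)) ((c : ℕ) + 1) * (zz ((l : ℕ) + 1) / zz (l : ℕ))),
        if_pos (Finset.mem_univ _)]
      have := Arel (a := a) hzzne (i + (p : ℕ)) (l : ℕ) hlN
      rw [this]
      simp only [Fin.val_mk]
      rw [← hr]
      ring
  rw [hfact, Matrix.det_mul, hU, mul_one]

end Clemmas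

open Matrix Finset
variable {n : ℕ}

/-- `M` has first row and column equal to `e₀` -/
def Pblk (M : Matrix (Fin (n + 1)) (Fin (n + 1)) K) : Prop :=
  M 0 0 = 1 ∧ ∀ k : Fin n, M k.succ 0 = 0 ∧ M 0 k.succ = 0

def blk (M : Matrix (Fin (n + 1)) (Fin (n + 1)) K) : Matrix (Fin n) (Fin n) K :=
  Matrix.of fun k l => M k.succ l.succ

lemma Pblk_one : Pblk (1 : Matrix (Fin (n + 1)) (Fin (n + 1)) K) := by
  refine ⟨by simp, fun k => ⟨?_, ?_⟩⟩ <;>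
    simp [Matrix.one_apply, Fin.succ_ne_zero, (Fin.succ_ne_zero k).symm]

lemma blk_one : blk (1 : Matrix (Fin (n + 1)) (Fin (n + 1)) K) = 1 := by
  ext k l
  simp [blk, Matrix.one_apply, Fin.succ_inj]

lemma Pblk_mul {M M' : Matrix (Fin (n + 1)) (Fin (n + 1)) K}
    (h : Pblk M) (h' : Pblk M') : Pblk (M * M') := by
  obtain ⟨h00, hside⟩ := h
  obtain ⟨h00', hside'⟩ := h'
  refine ⟨?_, fun k => ⟨?_, ?_⟩⟩ <;> rw [Matrix.mul_apply, Fin.sum_univ_succ]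
  · rw [h00, h00']
    simp only [one_mul]
    rw [Finset.sum_eq_zero fun m _ => by rw [(hside m).2, zero_mul]]
    ring
  · rw [(hside k).1, h00']
    rw [Finset.sum_eq_zero fun m _ => by rw [(hside' m).1, mul_zero]]
    ring
  · rw [h00, (hside' k).2]
    rw [Finset.sum_eq_zero fun m _ => by rw [(hside m).2, zero_mul]]
    ring

lemma blk_mul {M M' : Matrix (Fin (n + 1)) (Fin (n + 1)) K}
    (h : Pblk M) (h' : Pblk M') : blk (M * M') = blk M * blk M' := by
  ext k l
  show (M * M') k.succ l.succ = _
  rw [Matrix.mul_apply, Fin.sum_univ_succ, (h.2 k).1, zero_mul, zero_add, Matrix.mul_apply]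
  rfl

lemma Pblk_list (L : List (Matrix (Fin (n + 1)) (Fin (n + 1)) K))
    (h : ∀ M ∈ L, Pblk M) : Pblk L.prod ∧ blk L.prod = (L.map blk).prod := by
  induction L with
  | nil => exact ⟨Pblk_one, by simpa using blk_one⟩
  | cons M L ih =>
    have hM : Pblk M := h M List.mem_cons_self
    have hL := ih fun M' hM' => h M' (List.mem_cons_of_mem M hM')
    rw [List.prod_cons, List.map_cons, List.prod_cons]
    exact ⟨Pblk_mul hM hL.1, by rw [blk_mul hM hL.1, hL.2]⟩

lemma Pblk_ext {M M' : Matrix (Fin (n + 1)) (Fin (n + 1)) K}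
    (h : Pblk M) (h' : Pblk M') (hb : blk M = blk M') : M = M' := by
  ext k l
  refine Fin.cases ?_ (fun k' => ?_) k
  · refine Fin.cases ?_ (fun l' => ?_) l
    · rw [h.1, h'.1]
    · rw [(h.2 l').2, (h'.2 l').2]
  · refine Fin.cases ?_ (fun l' => ?_) l
    · rw [(h.2 k').1, (h'.2 k').1]
    · have := congrFun (congrFun hb k') l'
      exact this

lemma Pblk_Wfactor {i : ℕ} (hi : 2 ≤ i) (w : Fin (n + 1) → K) :
    Pblk (Wfactor (n + 1) i w) := by
  refine ⟨?_, fun k => ⟨?_, ?_⟩⟩ <;> rw [Wfactor, Matrix.of_apply]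
  · rw [if_pos rfl, if_pos (by simp; omega)]
  · rw [if_neg (Fin.succ_ne_zero k), if_neg ?_]
    rintro ⟨-, h2⟩
    simp only [Fin.val_zero] at h2
    omega
  · rw [if_neg (Fin.succ_ne_zero k).symm, if_neg ?_]
    rintro ⟨h1, -⟩
    simp only [Fin.val_zero] at h1
    omega

lemma blk_Wfactor {i : ℕ} (hi : 1 ≤ i) (w : Fin (n + 1) → K) :
    blk (Wfactor (n + 1) i w) = Wfactor n (i - 1) (fun s => w s.succ) := by
  ext k l
  show Wfactor (n + 1) i w k.succ l.succ = _
  rw [Wfactor, Wfactor, Matrix.of_apply, Matrix.of_apply]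
  by_cases hkl : k = l
  · subst hkl
    rw [if_pos rfl, if_pos rfl]
    by_cases h : (k : ℕ) + 1 + 1 < i
    · rw [if_pos (by simpa using h), if_pos (by omega)]
    · rw [if_neg (by simpa using h), if_neg (by omega)]
  · rw [if_neg (by simpa [Fin.succ_inj] using hkl), if_neg hkl]
    by_cases h : (k : ℕ) = (l : ℕ) + 1 ∧ i ≤ (l : ℕ) + 1 + 1
    · rw [if_pos (by simp [Fin.val_succ]; omega), if_pos ⟨h.1, by omega⟩]
    · rw [if_neg (by simp [Fin.val_succ]; omega), if_neg (by omega)]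


end WhirlAux


/-- An invertible lower triangular matrix `A` with nonzero bottom-left justified minors
is recovered from its flag-minor ratios `z_{i,j} = Δ_{[i,j],[1,j-i+1]}/Δ_{[i+1,j],[1,j-i]}`
as the product `A = Wⁿ(z_{n,n}) ⋯ W¹(z_{1,1}, z_{1,2}/z_{1,1}, …, z_{1,n}/z_{1,n-1})`. -/
theorem lowerTriangular_eq_whirl_factorization (n : ℕ) (K : Type*) [Field K]
    (A : Matrix (Fin n) (Fin n) K)
    (hdet : A.det ≠ 0)
    (hlt : ∀ i j : Fin n, i < j → A i j = 0)
    (hmin : ∀ i j : ℕ, 1 ≤ i → i ≤ j → j ≤ n →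
      minorF A (II n i j) (II n 1 (j - i + 1)) ≠ 0)
    (z : ℕ → ℕ → K)
    (hz : ∀ i j : ℕ, 1 ≤ i → i ≤ j → j ≤ n →
      z i j = minorF A (II n i j) (II n 1 (j - i + 1)) /
        minorF A (II n (i + 1) j) (II n 1 (j - i))) :
    A = (List.ofFn fun t : Fin n =>
      Wfactor n (n - (t : ℕ)) fun s : Fin n =>
        if (s : ℕ) + 1 = n - (t : ℕ) then z (n - (t : ℕ)) (n - (t : ℕ))
        else z (n - (t : ℕ)) ((s : ℕ) + 1) / z (n - (t : ℕ)) (s : ℕ)).prod := by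
  induction n generalizing z with
  | zero =>
    simp only [List.ofFn_zero, List.prod_nil]
    ext i j
    exact i.elim0
  | succ n ih =>
    classical
    set a : ℕ → ℕ → K := WhirlAux.ab A with ha
    have htri : ∀ {k l : ℕ}, k < l → a k l = 0 := by
      intro k l h
      rw [ha, WhirlAux.ab]
      split_ifs with hin
      · exact hlt ⟨k, hin.1⟩ ⟨l, hin.2⟩ h
      · rfl
    have hrow : ∀ k l : ℕ, n + 1 ≤ k → a k l = 0 := by
      intro k l h
      rw [ha, WhirlAux.ab, dif_neg]
      rintro ⟨h1, -⟩
      omega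
    have hdetprod : A.det = ∏ r, A r r := by
      apply Matrix.det_of_lowerTriangular
      intro i j h
      exact hlt i j h
    have hdiag : ∀ r, r < n + 1 → a r r ≠ 0 := by
      intro r hr
      rw [ha, WhirlAux.ab_apply A hr hr]
      intro hc
      apply hdet
      rw [hdetprod]
      exact Finset.prod_eq_zero (Finset.mem_univ ⟨r, hr⟩) hc
    have hDDm : ∀ m : ℕ, m ≤ n + 1 →
        minorF A (II (n+1) 1 m) (II (n+1) 1 m) = WhirlAux.DD a m := by
      intro m hm
      rw [WhirlAux.minorF_II_eq A (k := m) le_rfl hm (by omega) le_rfl hm (by omega)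
        (by omega) (by omega), WhirlAux.DD]
      congr 1
      ext p q
      simp only [Matrix.of_apply, ha]
      exact WhirlAux.ab_congr A (by omega) (by omega)
    have hEEm : ∀ m : ℕ, m + 1 ≤ n + 1 →
        minorF A (II (n+1) 2 (m+1)) (II (n+1) 1 m) = WhirlAux.EE a m := by
      intro m hm
      rw [WhirlAux.minorF_II_eq A (k := m) (by omega) hm (by omega) (by omega) (by omega)
        (by omega) (by omega) (by omega), WhirlAux.EE]
      congr 1
      ext p q
      simp only [Matrix.of_apply, ha]
      exact WhirlAux.ab_congr A (by omega) (by omega)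
    set zz : ℕ → K := fun m => WhirlAux.DD a m / WhirlAux.EE a (m - 1) with hzz
    have hzz0 : zz 0 = 1 := by
      rw [hzz]
      simp only []
      rw [show (0:ℕ) - 1 = 0 from rfl, WhirlAux.DD, WhirlAux.EE, Matrix.det_fin_zero,
        Matrix.det_fin_zero]
      norm_num
    have hzzdef : ∀ m, m < n + 1 → zz (m + 1) = WhirlAux.DD a (m + 1) / WhirlAux.EE a m :=
      fun m _ => rfl
    have hzzne : ∀ m, m ≤ n + 1 → zz m ≠ 0 := by
      intro m hm
      rcases Nat.eq_zero_or_pos m with h0 | hpos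
      · rw [h0, hzz0]; exact one_ne_zero
      obtain ⟨m', rfl⟩ : ∃ m', m = m' + 1 := ⟨m - 1, by omega⟩
      rw [hzzdef m' (by omega)]
      apply div_ne_zero
      · rw [← hDDm (m' + 1) hm]
        have := hmin 1 (m' + 1) le_rfl (by omega) hm
        simpa using this
      · rcases Nat.eq_zero_or_pos m' with h0' | hpos'
        · rw [h0', WhirlAux.EE, Matrix.det_fin_zero]; exact one_ne_zero
        · rw [← hEEm m' hm]
          have := hmin 2 (m' + 1) (by omega) (by omega) hm
          rw [show m' + 1 - 2 + 1 = m' by omega] at this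
          exact this
    have hz1 : ∀ m, 1 ≤ m → m ≤ n + 1 → z 1 m = zz m := by
      intro m h1 hm
      obtain ⟨m', rfl⟩ : ∃ m', m = m' + 1 := ⟨m - 1, by omega⟩
      rw [hz 1 (m' + 1) le_rfl h1 hm]
      rw [show m' + 1 - 1 + 1 = m' + 1 by omega, show m' + 1 - 1 = m' by omega]
      rw [hDDm (m' + 1) hm, hEEm m' hm, hzzdef m' (by omega)]
    -- the matrix B (lower-right block of A W₁⁻¹)
    set B : Matrix (Fin n) (Fin n) K :=
      Matrix.of fun k l : Fin n =>
        WhirlAux.CC a zz (n + 1) ((k : ℕ) + 1) ((l : ℕ) + 1) with hB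
    -- transfer of minors
    have Emain : ∀ i j : ℕ, 1 ≤ i → i ≤ j + 1 → j ≤ n →
        minorF B (II n i j) (II n 1 (j + 1 - i)) =
        minorF A (II (n+1) (i+1) (j+1)) (II (n+1) 1 (j + 1 - i)) := by
      intro i j h1 h2 h3
      have hm : j + 1 - i ≤ n + 1 := by omega
      rw [WhirlAux.minorF_II_eq B (k := j + 1 - i) h1 h3 h2 (by omega) (by omega) (by omega)
        (by omega) (by omega)]
      rw [WhirlAux.minorF_II_eq A (k := j + 1 - i) (by omega) (by omega) (by omega) (by omega)
        (by omega) (by omega) (by omega) (by omega)]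
      have lhs_eq : (Matrix.of fun p q : Fin (j + 1 - i) =>
          WhirlAux.ab B (i - 1 + (p : ℕ)) (1 - 1 + (q : ℕ))) =
          (Matrix.of fun p q : Fin (j + 1 - i) =>
            WhirlAux.CC a zz (n + 1) (i + (p : ℕ)) ((q : ℕ) + 1)) := by
        ext p q
        simp only [Matrix.of_apply]
        have hpn : i - 1 + (p : ℕ) < n := by have := p.2; omega
        have hqn : 1 - 1 + (q : ℕ) < n := by have := q.2; omega
        rw [WhirlAux.ab_apply B hpn hqn, hB]
        simp only [Matrix.of_apply, Fin.val_mk]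
        have e1 : i - 1 + (p : ℕ) + 1 = i + (p : ℕ) := by omega
        have e2 : 1 - 1 + (q : ℕ) + 1 = (q : ℕ) + 1 := by omega
        rw [e1, e2]
      have rhs_eq : (Matrix.of fun p q : Fin (j + 1 - i) =>
          WhirlAux.ab A (i + 1 - 1 + (p : ℕ)) (1 - 1 + (q : ℕ))) =
          (Matrix.of fun p q : Fin (j + 1 - i) => a (i + (p : ℕ)) (q : ℕ)) := by
        ext p q
        simp only [Matrix.of_apply, ha]
        exact WhirlAux.ab_congr A (by omega) (by omega)
      rw [lhs_eq, rhs_eq]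
      exact (WhirlAux.det_transfer htri hzz0 hzzne hzzdef hdiag hrow i (j + 1 - i) h1 hm).symm
    -- hypotheses for B
    have hltB : ∀ i j : Fin n, i < j → B i j = 0 := by
      intro i j hij
      rw [hB]
      simp only [Matrix.of_apply]
      exact WhirlAux.CC_upper htri _ _ (by exact_mod_cast Nat.succ_lt_succ hij)
    have hminB : ∀ i j : ℕ, 1 ≤ i → i ≤ j → j ≤ n →
        minorF B (II n i j) (II n 1 (j - i + 1)) ≠ 0 := by
      intro i j h1 h2 h3
      rw [show j - i + 1 = j + 1 - i by omega, Emain i j h1 (by omega) h3]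
      have := hmin (i + 1) (j + 1) (by omega) (by omega) (by omega)
      rw [show j + 1 - (i + 1) + 1 = j + 1 - i by omega] at this
      exact this
    have hdetB : B.det ≠ 0 := by
      rcases Nat.eq_zero_or_pos n with hn0 | hnpos
      · subst hn0
        rw [Matrix.det_fin_zero]
        exact one_ne_zero
      · have h1 : B.det = Matrix.det (Matrix.of fun p q : Fin n =>
            WhirlAux.CC a zz (n + 1) (1 + (p : ℕ)) ((q : ℕ) + 1)) := by
          congr 1
          ext p q
          rw [hB]
          simp only [Matrix.of_apply]
          rw [show 1 + (p : ℕ) = (p : ℕ) + 1 by omega]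
        have h3 : minorF A (II (n+1) 2 (n+1)) (II (n+1) 1 n) =
            Matrix.det (Matrix.of fun p q : Fin n => a (1 + (p : ℕ)) (q : ℕ)) := by
          rw [WhirlAux.minorF_II_eq A (k := n) (by omega) le_rfl (by omega) (by omega)
            (by omega) (by omega) (by omega) (by omega)]
          congr 1
          ext p q
          simp only [Matrix.of_apply, ha]
          exact WhirlAux.ab_congr A (by omega) (by omega)
        rw [h1, ← WhirlAux.det_transfer htri hzz0 hzzne hzzdef hdiag hrow 1 n le_rfl
          (by omega), ← h3]
        have := hmin 2 (n + 1) (by omega) (by omega) le_rfl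
        rw [show n + 1 - 2 + 1 = n by omega] at this
        exact this
    have hzB : ∀ i j : ℕ, 1 ≤ i → i ≤ j → j ≤ n →
        z (i + 1) (j + 1) = minorF B (II n i j) (II n 1 (j - i + 1)) /
          minorF B (II n (i + 1) j) (II n 1 (j - i)) := by
      intro i j h1 h2 h3
      rw [show j - i + 1 = j + 1 - i by omega, show j - i = j + 1 - (i + 1) by omega]
      rw [Emain i j h1 (by omega) h3, Emain (i + 1) j (by omega) (by omega) h3]
      rw [hz (i + 1) (j + 1) (by omega) (by omega) (by omega)]
      rw [show j + 1 - (i + 1) + 1 = j + 1 - i by omega]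
    have hBfact := ih B hdetB hltB hminB (fun i j => z (i + 1) (j + 1)) hzB
    -- the C matrix
    set C : Matrix (Fin (n+1)) (Fin (n+1)) K :=
      Matrix.of fun k l : Fin (n+1) => WhirlAux.CC a zz (n + 1) (k : ℕ) (l : ℕ) with hC
    have hPC : WhirlAux.Pblk C := by
      refine ⟨?_, fun k => ⟨?_, ?_⟩⟩
      · rw [hC]
        simp only [Matrix.of_apply, Fin.val_zero]
        exact WhirlAux.CC_00 htri hzz0 hzzdef hdiag (by omega)
      · rw [hC]
        simp only [Matrix.of_apply, Fin.val_succ, Fin.val_zero]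
        exact WhirlAux.CC_col0 htri hzz0 hzzdef hdiag hrow _ (by omega)
      · rw [hC]
        simp only [Matrix.of_apply, Fin.val_zero, Fin.val_succ]
        exact WhirlAux.CC_upper htri _ _ (by omega)
    have hblkC : WhirlAux.blk C = B := by
      ext k l
      rw [WhirlAux.blk, hC, hB]
      simp only [Matrix.of_apply, Fin.val_succ]
    -- split the list of factors
    rw [List.ofFn_succ', List.prod_concat]
    simp only [Fin.coe_castSucc, Fin.val_last]
    rw [show n + 1 - n = 1 by omega]
    have hfront : (List.ofFn fun i : Fin n => Wfactor (n+1) (n + 1 - (i : ℕ))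
        (fun s : Fin (n+1) =>
          if (s : ℕ) + 1 = n + 1 - (i : ℕ) then z (n+1-(i:ℕ)) (n+1-(i:ℕ))
          else z (n+1-(i:ℕ)) ((s:ℕ)+1) / z (n+1-(i:ℕ)) (s:ℕ))).prod = C := by
      have hmem : ∀ M ∈ (List.ofFn fun i : Fin n => Wfactor (n+1) (n + 1 - (i : ℕ))
          (fun s : Fin (n+1) =>
            if (s : ℕ) + 1 = n + 1 - (i : ℕ) then z (n+1-(i:ℕ)) (n+1-(i:ℕ))
            else z (n+1-(i:ℕ)) ((s:ℕ)+1) / z (n+1-(i:ℕ)) (s:ℕ))),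
          WhirlAux.Pblk M := by
        intro M hM
        rw [List.mem_ofFn] at hM
        obtain ⟨t, rfl⟩ := hM
        exact WhirlAux.Pblk_Wfactor (by have := t.isLt; omega) _
      obtain ⟨hP, hblk⟩ := WhirlAux.Pblk_list _ hmem
      refine WhirlAux.Pblk_ext hP hPC ?_
      rw [hblk, hblkC, List.map_ofFn, hBfact]
      refine congrArg List.prod (congrArg List.ofFn (funext fun t => ?_))
      simp only [Function.comp_apply]
      rw [WhirlAux.blk_Wfactor (by omega)]
      have et1 : n + 1 - (t : ℕ) - 1 = n - (t : ℕ) := by omega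
      have et2 : n + 1 - (t : ℕ) = n - (t : ℕ) + 1 := by have := t.isLt; omega
      rw [et1]
      refine congrArg _ (funext fun s => ?_)
      simp only [Fin.val_succ]
      rw [et2]
      by_cases hcond : (s : ℕ) + 1 = n - (t : ℕ)
      · rw [if_pos (show (s:ℕ) + 1 + 1 = n - (t:ℕ) + 1 by omega), if_pos hcond]
      · rw [if_neg (show ¬((s:ℕ) + 1 + 1 = n - (t:ℕ) + 1) by omega), if_neg hcond]
    rw [hfront]
    -- final entrywise verification A = C * W₁
    ext k l
    rw [Matrix.mul_apply]
    have hWl : ∀ m : Fin (n+1),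
        Wfactor (n+1) 1 (fun s : Fin (n+1) =>
          if (s : ℕ) + 1 = 1 then z 1 1 else z 1 ((s:ℕ)+1) / z 1 (s:ℕ)) m l =
        (if m = l then zz ((l:ℕ)+1) / zz (l:ℕ) else 0) +
        (if (m:ℕ) = (l:ℕ) + 1 then 1 else 0) := by
      intro m
      simp only [Wfactor, Matrix.of_apply]
      by_cases hml : m = l
      · subst hml
        rw [if_pos rfl, if_pos rfl]
        rw [if_neg (show ¬((m:ℕ) + 1 < 1) by omega)]
        rw [if_neg (show ¬((m:ℕ) = (m:ℕ) + 1) by omega), add_zero]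
        rcases Nat.eq_zero_or_pos (m : ℕ) with h0 | hpos
        · rw [if_pos (show (m:ℕ) + 1 = 1 by omega), hz1 1 le_rfl (by omega), h0, hzz0, div_one]
        · rw [if_neg (show ¬((m:ℕ) + 1 = 1) by omega),
            hz1 ((m:ℕ)+1) (by omega) (by have := m.isLt; omega),
            hz1 (m:ℕ) (by omega) (by have := m.isLt; omega)]
      · rw [if_neg hml, if_neg hml, zero_add]
        by_cases hv : (m:ℕ) = (l:ℕ) + 1
        · rw [if_pos ⟨hv, by omega⟩, if_pos hv]
        · rw [if_neg (by rintro ⟨h1, -⟩; exact hv h1), if_neg hv]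
    rw [Finset.sum_congr rfl (fun m _ => by rw [hWl m])]
    have expand : ∀ m : Fin (n+1),
        C k m * ((if m = l then zz ((l:ℕ)+1) / zz (l:ℕ) else 0) +
          (if (m:ℕ) = (l:ℕ) + 1 then 1 else 0)) =
        (if m = l then C k m * (zz ((l:ℕ)+1) / zz (l:ℕ)) else 0) +
        (if (m:ℕ) = (l:ℕ) + 1 then C k m else 0) := by
      intro m
      rw [mul_add, mul_ite, mul_zero, mul_ite, mul_one, mul_zero]
    rw [Finset.sum_congr rfl (fun m _ => expand m), Finset.sum_add_distrib]
    rw [Finset.sum_ite_eq' Finset.univ l (fun m => C k m * (zz ((l:ℕ)+1) / zz (l:ℕ))),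
      if_pos (Finset.mem_univ l)]
    have hAa : A k l = WhirlAux.ab A (k : ℕ) (l : ℕ) := by
      rw [WhirlAux.ab_apply A k.isLt l.isLt]
    have hArel := WhirlAux.Arel (a := WhirlAux.ab A) (zz := zz) hzzne (k : ℕ) (l : ℕ) l.isLt
    rcases Nat.lt_or_ge ((l : ℕ) + 1) (n + 1) with hlow | hhigh
    · have hpick : ∑ m : Fin (n+1), (if (m:ℕ) = (l:ℕ) + 1 then C k m else 0) =
          C k ⟨(l:ℕ)+1, hlow⟩ := by
        have hre : ∀ m : Fin (n+1), (if (m:ℕ) = (l:ℕ) + 1 then C k m else 0) =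
            (if m = ⟨(l:ℕ)+1, hlow⟩ then C k m else 0) := by
          intro m
          by_cases hc : (m:ℕ) = (l:ℕ) + 1
          · rw [if_pos hc, if_pos (Fin.ext hc)]
          · rw [if_neg hc, if_neg (fun hh => hc (by rw [hh]))]
        rw [Finset.sum_congr rfl (fun m _ => hre m),
          Finset.sum_ite_eq' Finset.univ (⟨(l:ℕ)+1, hlow⟩ : Fin (n+1)) (fun m => C k m),
          if_pos (Finset.mem_univ _)]
      rw [hpick, hAa, hArel, hC]
      simp only [Matrix.of_apply, Fin.val_mk]
      rfl
    · have hzero : ∑ m : Fin (n+1), (if (m:ℕ) = (l:ℕ) + 1 then C k m else 0) = 0 := by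
        refine Finset.sum_eq_zero fun m _ => ?_
        rw [if_neg (by have := m.isLt; omega)]
      have hln : (l : ℕ) = n := by have := l.isLt; omega
      rw [hzero, hAa, hArel, hC]
      simp only [Matrix.of_apply]
      rw [← ha, hln, WhirlAux.CC_end, add_zero]
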